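/- Let ℓ, c₁, c₂, c₃, c₇ > 0 be real numbers. In the exterior algebra Λ•(ℝ⁷) with standard basis e₁,…,e₇, define ω̃₁ = √(c₇c₁) e₇∧e₁ + √(c₂c₃) e₂∧e₃, ω̃₂ = √(c₇c₂) e₇∧e₂ − √(c₁c₃) e₁∧e₃, ω̃₃ = −√(c₇c₃) e₇∧e₃ − √(c₁c₂) e₁∧e₂, and set φ² = ℓ^{3/2} e₄∧e₅∧e₆ + √ℓ e₄∧ω̃₁ + √ℓ e₅∧ω̃₂ + √ℓ e₆∧ω̃₃. Then there exists a basis u₁,…,u₇ of ℝ⁷ such that φ² = u₁∧u₂∧u₃ − u₁∧u₄∧u₅ − u₁∧u₆∧u₇ − u₂∧u₄∧u₆ + u₂∧u₅∧u₇ − u₃∧u₄∧u₇ − u₃∧u₅∧u₆; that is, φ² is a 3-vector of G₂-type. -/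

import Mathlib

/-- The generator of `Λ•(ℝ⁷)` corresponding to the `i`-th standard basis vector. -/
noncomputable def e7 (i : Fin 7) : ExteriorAlgebra ℝ (Fin 7 → ℝ) :=
  ExteriorAlgebra.ι ℝ (Pi.single i 1)

/-- The standard associative 3-form `φ₀` evaluated on a family `u₁, …, u₇` (indexed by
`0, …, 6`):
`u₁∧u₂∧u₃ − u₁∧u₄∧u₅ − u₁∧u₆∧u₇ − u₂∧u₄∧u₆ + u₂∧u₅∧u₇ − u₃∧u₄∧u₇ − u₃∧u₅∧u₆`. -/
noncomputable def g2Form (u : Fin 7 → (Fin 7 → ℝ)) : ExteriorAlgebra ℝ (Fin 7 → ℝ) :=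
  let w : Fin 7 → ExteriorAlgebra ℝ (Fin 7 → ℝ) := fun i => ExteriorAlgebra.ι ℝ (u i)
  w 0 * w 1 * w 2 - w 0 * w 3 * w 4 - w 0 * w 5 * w 6 - w 1 * w 3 * w 5
    + w 1 * w 4 * w 6 - w 2 * w 3 * w 6 - w 2 * w 4 * w 5

/-- with standard basis `e₁, …, e₇` (indexed here by `0, …, 6`), the 3-vector
`φ² = ℓ^{3/2} e₄∧e₅∧e₆ + √ℓ e₄∧ω̃₁ + √ℓ e₅∧ω̃₂ + √ℓ e₆∧ω̃₃`, with
`ω̃₁ = √(c₇c₁) e₇∧e₁ + √(c₂c₃) e₂∧e₃`, `ω̃₂ = √(c₇c₂) e₇∧e₂ − √(c₁c₃) e₁∧e₃`,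
`ω̃₃ = −√(c₇c₃) e₇∧e₃ − √(c₁c₂) e₁∧e₂`, is of G₂-type: it equals the standard associative
3-form in some basis `u₁, …, u₇` of `ℝ⁷`. -/
theorem statement9 (ℓ c₁ c₂ c₃ c₇ : ℝ) (hℓ : 0 < ℓ) (hc₁ : 0 < c₁) (hc₂ : 0 < c₂)
    (hc₃ : 0 < c₃) (hc₇ : 0 < c₇) :
    ∀ ω₁ ω₂ ω₃ φ : ExteriorAlgebra ℝ (Fin 7 → ℝ),
      ω₁ = Real.sqrt (c₇ * c₁) • (e7 6 * e7 0) + Real.sqrt (c₂ * c₃) • (e7 1 * e7 2) →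
      ω₂ = Real.sqrt (c₇ * c₂) • (e7 6 * e7 1) - Real.sqrt (c₁ * c₃) • (e7 0 * e7 2) →
      ω₃ = -(Real.sqrt (c₇ * c₃) • (e7 6 * e7 2)) - Real.sqrt (c₁ * c₂) • (e7 0 * e7 1) →
      φ = Real.sqrt (ℓ ^ 3) • (e7 3 * e7 4 * e7 5)
          + Real.sqrt ℓ • (e7 3 * ω₁) + Real.sqrt ℓ • (e7 4 * ω₂)
          + Real.sqrt ℓ • (e7 5 * ω₃) →
      ∃ u : Module.Basis (Fin 7) ℝ (Fin 7 → ℝ), φ = g2Form (fun i => u i) := by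
  intro ω₁ ω₂ ω₃ φ h1 h2 h3 h4
  -- scalars
  set d : Fin 7 → ℝ := ![Real.sqrt ℓ, Real.sqrt ℓ, Real.sqrt ℓ,
    -Real.sqrt c₇, Real.sqrt c₁, Real.sqrt c₂, -Real.sqrt c₃] with hd
  have hdne : ∀ j, d j ≠ 0 := by
    have hs : ∀ x : ℝ, 0 < x → Real.sqrt x ≠ 0 := fun x hx => (Real.sqrt_pos.2 hx).ne'
    intro j
    fin_cases j
    · exact hs ℓ hℓ
    · exact hs ℓ hℓ
    · exact hs ℓ hℓ
    · exact neg_ne_zero.2 (hs c₇ hc₇)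
    · exact hs c₁ hc₁
    · exact hs c₂ hc₂
    · exact neg_ne_zero.2 (hs c₃ hc₃)
  refine ⟨(((Pi.basisFun ℝ (Fin 7)).reindex (Equiv.addRight (3:Fin 7)).symm).unitsSMul
    (fun j => Units.mk0 (d j) (hdne j))), ?_⟩
  have hu : ∀ j : Fin 7,
      (((Pi.basisFun ℝ (Fin 7)).reindex (Equiv.addRight (3:Fin 7)).symm).unitsSMul
        (fun j => Units.mk0 (d j) (hdne j))) j = d j • (Pi.single (j + 3) 1 : Fin 7 → ℝ) := by
    intro j
    simp [Module.Basis.unitsSMul_apply, Pi.basisFun_apply]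
  have hι : ∀ j : Fin 7,
      ExteriorAlgebra.ι ℝ ((((Pi.basisFun ℝ (Fin 7)).reindex
          (Equiv.addRight (3:Fin 7)).symm).unitsSMul (fun j => Units.mk0 (d j) (hdne j))) j)
        = d j • e7 (j + 3) := by
    intro j; rw [hu, map_smul]; rfl
  have k0 : ExteriorAlgebra.ι ℝ ((((Pi.basisFun ℝ (Fin 7)).reindex
      (Equiv.addRight (3:Fin 7)).symm).unitsSMul (fun j => Units.mk0 (d j) (hdne j))) 0)
      = Real.sqrt ℓ • e7 3 := hι 0
  have k1 : ExteriorAlgebra.ι ℝ ((((Pi.basisFun ℝ (Fin 7)).reindex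
      (Equiv.addRight (3:Fin 7)).symm).unitsSMul (fun j => Units.mk0 (d j) (hdne j))) 1)
      = Real.sqrt ℓ • e7 4 := hι 1
  have k2 : ExteriorAlgebra.ι ℝ ((((Pi.basisFun ℝ (Fin 7)).reindex
      (Equiv.addRight (3:Fin 7)).symm).unitsSMul (fun j => Units.mk0 (d j) (hdne j))) 2)
      = Real.sqrt ℓ • e7 5 := hι 2
  have k3 : ExteriorAlgebra.ι ℝ ((((Pi.basisFun ℝ (Fin 7)).reindex
      (Equiv.addRight (3:Fin 7)).symm).unitsSMul (fun j => Units.mk0 (d j) (hdne j))) 3)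
      = (-Real.sqrt c₇) • e7 6 := hι 3
  have k4 : ExteriorAlgebra.ι ℝ ((((Pi.basisFun ℝ (Fin 7)).reindex
      (Equiv.addRight (3:Fin 7)).symm).unitsSMul (fun j => Units.mk0 (d j) (hdne j))) 4)
      = Real.sqrt c₁ • e7 0 := hι 4
  have k5 : ExteriorAlgebra.ι ℝ ((((Pi.basisFun ℝ (Fin 7)).reindex
      (Equiv.addRight (3:Fin 7)).symm).unitsSMul (fun j => Units.mk0 (d j) (hdne j))) 5)
      = Real.sqrt c₂ • e7 1 := hι 5
  have k6 : ExteriorAlgebra.ι ℝ ((((Pi.basisFun ℝ (Fin 7)).reindex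
      (Equiv.addRight (3:Fin 7)).symm).unitsSMul (fun j => Units.mk0 (d j) (hdne j))) 6)
      = (-Real.sqrt c₃) • e7 2 := hι 6
  simp only [g2Form]
  rw [k0, k1, k2, k3, k4, k5, k6]
  have h037 : Real.sqrt (ℓ ^ 3) = Real.sqrt ℓ ^ 3 := by
    rw [show ℓ^3 = ℓ*ℓ*ℓ by ring, Real.sqrt_mul (by positivity), Real.sqrt_mul hℓ.le]; ring
  subst h1 h2 h3 h4
  rw [h037, Real.sqrt_mul hc₇.le, Real.sqrt_mul hc₂.le, Real.sqrt_mul hc₇.le,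
    Real.sqrt_mul hc₁.le, Real.sqrt_mul hc₇.le, Real.sqrt_mul hc₁.le]
  simp only [smul_mul_assoc, mul_smul_comm, smul_smul, mul_add, mul_sub, smul_add,
    smul_sub, smul_neg, neg_smul, neg_mul, mul_neg, neg_neg, mul_assoc]
  match_scalars <;> ring
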